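/- Let V ∈ L¹(ℝ³) be radially symmetric with |·|⁻² V ∈ L¹(ℝ³) and ∫_{ℝ³} V(x)/|x|² dx < 0. Define v_μ = ∫_{ℝ³} V(x) (sin(√μ |x|)/(√μ |x|))² dx. Then there exist constants c > 0 and μ₀ > 0 such that v_μ ≤ −c μ⁻¹ for all μ ≥ μ₀. -/

import Mathlib

open MeasureTheory Filter Topology Set Metric
open scoped FourierTransform

noncomputable section

local notation "E3" => EuclideanSpace ℝ (Fin 3)

lemma norm_symm_homeo (p : sphere (0 : E3) 1 × Ioi (0:ℝ)) :
    ‖((homeomorphUnitSphereProd E3).symm p : E3)‖ = (p.2 : ℝ) := by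
  obtain ⟨⟨s, hs⟩, ⟨r, hr⟩⟩ := p
  simp [homeomorphUnitSphereProd, norm_smul, mem_sphere_zero_iff_norm.mp hs,
    abs_of_pos (mem_Ioi.mp hr)]

lemma radial_integrable (g : ℝ → ℝ)
    (h2 : Integrable (fun x : E3 => g ‖x‖ / ‖x‖ ^ 2)) :
    IntegrableOn g (Ioi (0:ℝ)) := by
  classical
  set W : E3 → ℝ := fun x => g ‖x‖ / ‖x‖ ^ 2 with hW
  set F : ℝ → ℝ := fun r => g r / r ^ 2 with hFdef
  have hdim3 : Module.finrank ℝ E3 - 1 = 2 := by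
    rw [finrank_euclideanSpace_fin]
  have hs0 : MeasurableSet ({(0:E3)}ᶜ) := (measurableSet_singleton _).compl
  have hWc : AEStronglyMeasurable (fun x : ({(0:E3)}ᶜ : Set E3) => W x)
      ((volume : Measure E3).comap (↑)) := by
    have h := h2.aestronglyMeasurable.restrict (s := {(0:E3)}ᶜ)
    rw [← map_comap_subtype_coe hs0] at h
    exact ((MeasurableEmbedding.subtype_coe hs0).aestronglyMeasurable_map_iff).mp h
  have MP := (volume : Measure E3).measurePreserving_homeomorphUnitSphereProd
  rw [hdim3] at MP
  set P := (volume : Measure E3).toSphere.prod (Measure.volumeIoiPow 2) with hP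
  have MPe : MeasurePreserving ((homeomorphUnitSphereProd E3).toMeasurableEquiv)
      ((volume : Measure E3).comap (↑)) P := MP
  have MPs := MPe.symm _
  have hsymm_eq : ∀ p : sphere (0 : E3) 1 × Ioi (0:ℝ),
      W (((homeomorphUnitSphereProd E3).toMeasurableEquiv.symm p : ({(0:E3)}ᶜ : Set E3)) : E3)
        = F (p.2 : ℝ) := by
    intro p
    show W ((homeomorphUnitSphereProd E3).symm p : E3) = _
    rw [hW, hFdef]
    simp only [norm_symm_homeo]
  have hA : AEStronglyMeasurable (fun p : sphere (0:E3) 1 × Ioi (0:ℝ) => F (p.2 : ℝ)) P := by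
    have h := hWc.comp_quasiMeasurePreserving MPs.quasiMeasurePreserving
    exact h.congr (Eventually.of_forall fun p => hsymm_eq p)
  have hSuniv : (volume : Measure E3).toSphere univ ≠ 0 := by
    rw [Measure.toSphere_apply_univ]
    exact mul_ne_zero (by simp [finrank_euclideanSpace_fin])
      (measure_ball_pos _ _ one_pos).ne'
  have hne : (ae ((volume : Measure E3).toSphere)).NeBot :=
    ae_neBot.mpr (fun h => hSuniv (by simp [h]))
  obtain ⟨s0, hs0'⟩ := hA.prodMk_left.exists
  -- hs0' : AEStronglyMeasurable (fun r : Ioi 0 => F r) (volumeIoiPow 2)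
  have hac : (Measure.comap ((↑) : Ioi (0:ℝ) → ℝ) volume) ≪ Measure.volumeIoiPow 2 := by
    refine withDensity_absolutelyContinuous' ?_ ?_
    · exact (measurable_subtype_coe.pow_const 2).ennreal_ofReal.aemeasurable
    · refine Eventually.of_forall fun r => ?_
      simp only [ne_eq, ENNReal.ofReal_eq_zero, not_le]
      exact pow_pos r.2 2
  have hFc : AEStronglyMeasurable (fun r : Ioi (0:ℝ) => F (r : ℝ))
      (Measure.comap ((↑) : Ioi (0:ℝ) → ℝ) volume) := hs0'.mono_ac hac
  have hFr : AEStronglyMeasurable F (volume.restrict (Ioi (0:ℝ))) := by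
    rw [← map_comap_subtype_coe measurableSet_Ioi]
    exact (MeasurableEmbedding.subtype_coe measurableSet_Ioi).aestronglyMeasurable_map_iff.mpr hFc
  have hgm : AEStronglyMeasurable g (volume.restrict (Ioi (0:ℝ))) := by
    have h : AEStronglyMeasurable (fun r => F r * r ^ 2) (volume.restrict (Ioi (0:ℝ))) :=
      hFr.mul ((continuous_pow 2).aestronglyMeasurable)
    refine h.congr ?_
    filter_upwards [ae_restrict_mem measurableSet_Ioi] with r hr
    simp only [hFdef]
    exact div_mul_cancel₀ _ (pow_ne_zero 2 (ne_of_gt (mem_Ioi.mp hr)))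
  -- finiteness
  have h0 : ∫⁻ x : E3, (‖W x‖₊ : ENNReal) ∂volume < ⊤ := h2.2
  have e6 : ∫⁻ x : ({(0:E3)}ᶜ : Set E3), (‖W (x:E3)‖₊ : ENNReal) ∂(Measure.comap ((↑) : ({(0:E3)}ᶜ : Set E3) → E3) volume)
      = ∫⁻ x in {(0:E3)}ᶜ, (‖W x‖₊ : ENNReal) ∂volume :=
    lintegral_subtype_comap hs0 (fun x => (‖W x‖₊ : ENNReal))
  have e5 : ∫⁻ x : ({(0:E3)}ᶜ : Set E3), (‖W (x:E3)‖₊ : ENNReal) ∂(Measure.comap ((↑) : ({(0:E3)}ᶜ : Set E3) → E3) volume)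
      = ∫⁻ p, (‖F (p.2 : ℝ)‖₊ : ENNReal) ∂P := by
    rw [← MPs.map_eq, lintegral_map' ?hf ?hg]
    · exact lintegral_congr fun p => by rw [hsymm_eq p]
    case hf => rw [MPs.map_eq]; exact hWc.enorm
    case hg => exact (homeomorphUnitSphereProd E3).toMeasurableEquiv.symm.measurable.aemeasurable
  have e4 : ∫⁻ p, (‖F (p.2 : ℝ)‖₊ : ENNReal) ∂P
      = (∫⁻ r : Ioi (0:ℝ), (‖F (r : ℝ)‖₊ : ENNReal) ∂(Measure.volumeIoiPow 2))
          * (volume : Measure E3).toSphere univ := by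
    rw [hP, lintegral_prod (fun p : sphere (0:E3) 1 × Ioi (0:ℝ) => (‖F (p.2 : ℝ)‖₊ : ENNReal)) hA.enorm]
    simp [lintegral_const, mul_comm]
  have hCfin : ∫⁻ r : Ioi (0:ℝ), (‖F (r : ℝ)‖₊ : ENNReal) ∂(Measure.volumeIoiPow 2) < ⊤ := by
    refine ENNReal.lt_top_of_mul_ne_top_left ?_ hSuniv
    rw [← e4, ← e5, e6]
    exact ((setLIntegral_le_lintegral _ _).trans_lt h0).ne
  have e3 : ∫⁻ r : Ioi (0:ℝ), (‖F (r : ℝ)‖₊ : ENNReal) ∂(Measure.volumeIoiPow 2)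
      = ∫⁻ r : Ioi (0:ℝ), ENNReal.ofReal ((r:ℝ)^2) * (‖F (r : ℝ)‖₊ : ENNReal)
          ∂(Measure.comap ((↑) : Ioi (0:ℝ) → ℝ) volume) := by
    rw [Measure.volumeIoiPow,
      lintegral_withDensity_eq_lintegral_mul₀'
        ((measurable_subtype_coe.pow_const 2).ennreal_ofReal.aemeasurable) (g := fun r : Ioi (0:ℝ) => (‖F (r : ℝ)‖₊ : ENNReal)) hs0'.enorm]
    rfl
  have e2 : ∫⁻ r : Ioi (0:ℝ), ENNReal.ofReal ((r:ℝ)^2) * (‖F (r : ℝ)‖₊ : ENNReal)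
        ∂(Measure.comap ((↑) : Ioi (0:ℝ) → ℝ) volume)
      = ∫⁻ r : Ioi (0:ℝ), (‖g (r:ℝ)‖₊ : ENNReal) ∂(Measure.comap ((↑) : Ioi (0:ℝ) → ℝ) volume) := by
    refine lintegral_congr fun r => ?_
    have hr : (0:ℝ) < r := mem_Ioi.mp r.2
    rw [hFdef]
    rw [← enorm_eq_nnnorm, ← enorm_eq_nnnorm, ← ofReal_norm, ← ofReal_norm,
      ← ENNReal.ofReal_mul (by positivity)]
    congr 1
    rw [norm_div, Real.norm_eq_abs, Real.norm_eq_abs, abs_of_pos (pow_pos hr 2)]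
    field_simp
  have e1 : ∫⁻ r : Ioi (0:ℝ), (‖g (r:ℝ)‖₊ : ENNReal) ∂(Measure.comap ((↑) : Ioi (0:ℝ) → ℝ) volume)
      = ∫⁻ r in Ioi (0:ℝ), (‖g r‖₊ : ENNReal) ∂volume := lintegral_subtype_comap measurableSet_Ioi (fun r => (‖g r‖₊ : ENNReal))
  refine ⟨hgm, ?_⟩
  show ∫⁻ r in Ioi (0:ℝ), (‖g r‖₊ : ENNReal) ∂volume < ⊤
  rw [← e1, ← e2, ← e3]
  exact hCfin

lemma rl_cos (f : ℝ → ℝ) (hf : Integrable f) :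
    Tendsto (fun lam : ℝ => ∫ v, f v * Real.cos (lam * v)) atTop (𝓝 0) := by
  have hint : ∀ w : ℝ, Integrable (fun v => 𝐞 (-(v * w)) • (f v : ℂ)) := by
    intro w
    have hc : Continuous fun v : ℝ => ((𝐞 (-(v * w)) : Circle) : ℂ) :=
      by fun_prop
    have h := hf.ofReal.bdd_mul (c := 1) hc.aestronglyMeasurable (Eventually.of_forall fun v => (Circle.norm_coe _).le)
    simpa [Circle.smul_def] using h
  have h0 : Tendsto (fun w : ℝ => ∫ v : ℝ, 𝐞 (-(v * w)) • ((f v : ℂ))) (cocompact ℝ) (𝓝 0) :=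
    Real.tendsto_integral_exp_smul_cocompact (fun v => (f v : ℂ))
  have hmap : Tendsto (fun lam : ℝ => lam / (2 * Real.pi)) atTop (cocompact ℝ) := by
    rw [cocompact_eq_atBot_atTop]
    exact (tendsto_id.atTop_div_const (by positivity)).mono_right le_sup_right
  have h1 := (Complex.continuous_re.tendsto 0).comp (h0.comp hmap)
  simp only [Function.comp_def, Complex.zero_re] at h1
  convert h1 using 2 with lam
  have h2 := integral_re (μ := (volume : Measure ℝ)) (𝕜 := ℂ) (hint (lam / (2 * Real.pi)))
  simp only [RCLike.re_to_complex] at h2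
  rw [← h2]
  refine integral_congr_ae (Eventually.of_forall fun v => ?_)
  have hang : 2 * Real.pi * -(v * (lam / (2 * Real.pi))) = -(v * lam) := by
    field_simp
  simp only [Real.fourierChar_apply, Circle.smul_def, smul_eq_mul, hang, Complex.mul_re,
    Complex.ofReal_re, Complex.ofReal_im, Complex.exp_ofReal_mul_I_re,
    Complex.exp_ofReal_mul_I_im, mul_zero, sub_zero, Real.cos_neg]
  ring


lemma polar_formula (Vf : E3 → ℝ) (f : ℝ → ℝ) (hVf : ∀ x, Vf x = f ‖x‖) :
    ∫ x : E3, Vf x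
      = (3 * (volume (ball (0 : E3) 1)).toReal) * ∫ y in Ioi (0:ℝ), y ^ 2 * f y := by
  rw [show (fun x : E3 => Vf x) = fun x => f ‖x‖ from funext hVf]
  rw [integral_fun_norm_addHaar (volume : Measure E3) f]
  simp only [finrank_euclideanSpace_fin, nsmul_eq_mul, smul_eq_mul, Nat.cast_ofNat]
  norm_num [mul_assoc]
  left; simp [measureReal_def]

theorem vmu_upper_bound
    (V : EuclideanSpace ℝ (Fin 3) → ℝ) (g : ℝ → ℝ)
    (hrad : ∀ x, V x = g ‖x‖)
    (hV1 : Integrable V)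
    (hV2 : Integrable (fun x => V x / ‖x‖ ^ 2))
    (hneg : (∫ x, V x / ‖x‖ ^ 2) < 0) :
    ∃ c > (0 : ℝ), ∃ μ₀ > (0 : ℝ), ∀ μ ≥ μ₀,
      (∫ x, V x * (Real.sin (Real.sqrt μ * ‖x‖) / (Real.sqrt μ * ‖x‖)) ^ 2)
        ≤ -c / μ := by
  set c1 : ℝ := (volume (ball (0 : EuclideanSpace ℝ (Fin 3)) 1)).toReal with hc1
  have hc1pos : 0 < c1 :=
    ENNReal.toReal_pos (measure_ball_pos _ _ one_pos).ne' measure_ball_lt_top.ne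
  set K : ℝ := 3 * c1 with hKdef
  have hK : 0 < K := by positivity
  have hgInt : IntegrableOn g (Ioi (0:ℝ)) := by
    refine radial_integrable g ?_
    have h : (fun x : E3 => g ‖x‖ / ‖x‖ ^ 2) = fun x => V x / ‖x‖ ^ 2 :=
      funext fun x => by rw [hrad]
    rw [h]; exact hV2
  set I : ℝ := ∫ y in Ioi (0:ℝ), g y with hIdef
  have hKI : (∫ x, V x / ‖x‖ ^ 2) = K * I := by
    rw [polar_formula (fun x : E3 => V x / ‖x‖ ^ 2) (fun r => g r / r ^ 2)
      (fun x => by simp only [hrad])]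
    congr 1
    refine setIntegral_congr_fun measurableSet_Ioi fun y hy => ?_
    have hy0 : (y:ℝ) ≠ 0 := ne_of_gt hy
    field_simp
  have hI : I < 0 := by
    rw [hKI] at hneg
    by_contra h
    push_neg at h
    nlinarith
  have hf0 : Integrable ((Ioi (0:ℝ)).indicator g) :=
    (integrable_indicator_iff measurableSet_Ioi).mpr hgInt
  have hRL0 := rl_cos _ hf0
  have heq : ∀ lam : ℝ, (∫ v, (Ioi (0:ℝ)).indicator g v * Real.cos (lam * v))
      = ∫ y in Ioi (0:ℝ), g y * Real.cos (lam * y) := by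
    intro lam
    rw [← integral_indicator measurableSet_Ioi]
    congr 1
    funext v
    simp only [Set.indicator_apply]
    split <;> simp
  have hRL : Tendsto (fun lam : ℝ => ∫ y in Ioi (0:ℝ), g y * Real.cos (lam * y)) atTop (𝓝 0) :=
    hRL0.congr heq
  have hmulInt : ∀ φ : ℝ → ℝ, Continuous φ → (∀ y, |φ y| ≤ 1) →
      IntegrableOn (fun y => g y * φ y) (Ioi (0:ℝ)) := by
    intro φ hφc hφb
    refine Integrable.mono hgInt (hgInt.aestronglyMeasurable.mul hφc.aestronglyMeasurable)
      (Eventually.of_forall fun y => ?_)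
    simp only [norm_mul, Real.norm_eq_abs]
    calc |g y| * |φ y| ≤ |g y| * 1 := mul_le_mul_of_nonneg_left (hφb y) (abs_nonneg _)
      _ = |g y| := mul_one _
  have hdecomp : ∀ lam : ℝ, (∫ y in Ioi (0:ℝ), g y * Real.sin (lam * y) ^ 2)
      = I / 2 - (∫ y in Ioi (0:ℝ), g y * Real.cos (2 * lam * y)) / 2 := by
    intro lam
    have hcosI : IntegrableOn (fun y => g y * Real.cos (2 * lam * y)) (Ioi (0:ℝ)) :=
      hmulInt _ (by fun_prop) (fun y => Real.abs_cos_le_one _)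
    have hptw : ∀ y : ℝ, g y * Real.sin (lam * y) ^ 2
        = g y / 2 - g y * Real.cos (2 * lam * y) / 2 := by
      intro y
      rw [Real.sin_sq_eq_half_sub, show 2 * (lam * y) = 2 * lam * y by ring]
      ring
    calc (∫ y in Ioi (0:ℝ), g y * Real.sin (lam * y) ^ 2)
        = ∫ y in Ioi (0:ℝ), (g y / 2 - g y * Real.cos (2 * lam * y) / 2) :=
          integral_congr_ae (Eventually.of_forall fun y => hptw y)
      _ = (∫ y in Ioi (0:ℝ), g y / 2) - ∫ y in Ioi (0:ℝ), g y * Real.cos (2 * lam * y) / 2 :=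
          integral_sub (hgInt.div_const 2) (hcosI.div_const 2)
      _ = I / 2 - (∫ y in Ioi (0:ℝ), g y * Real.cos (2 * lam * y)) / 2 := by
          rw [integral_div, integral_div]
  have hFt : Tendsto (fun lam : ℝ => ∫ y in Ioi (0:ℝ), g y * Real.sin (lam * y) ^ 2)
      atTop (𝓝 (I / 2)) := by
    have h2 : Tendsto (fun lam : ℝ => 2 * lam) atTop atTop :=
      Tendsto.const_mul_atTop two_pos tendsto_id
    have hT := (tendsto_const_nhds (x := I / 2) (f := atTop)).sub ((hRL.comp h2).div_const 2)
    simp only [zero_div, sub_zero] at hT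
    exact hT.congr fun lam => (hdecomp lam).symm
  have hev : ∀ᶠ lam in atTop,
      (∫ y in Ioi (0:ℝ), g y * Real.sin (lam * y) ^ 2) < I / 4 :=
    hFt.eventually_lt_const (by linarith)
  obtain ⟨L, hL⟩ := eventually_atTop.mp hev
  refine ⟨-(K * I / 4), by nlinarith, max (L ^ 2) 1, by positivity, fun μ hμ => ?_⟩
  have hμ1 : (1:ℝ) ≤ μ := le_trans (le_max_right _ _) hμ
  have hμpos : 0 < μ := lt_of_lt_of_le one_pos hμ1
  have hsqrt : L ≤ Real.sqrt μ := by
    calc L ≤ |L| := le_abs_self L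
      _ = Real.sqrt (L ^ 2) := (Real.sqrt_sq_eq_abs L).symm
      _ ≤ Real.sqrt μ := Real.sqrt_le_sqrt (le_trans (le_max_left _ _) hμ)
  have hs := hL (Real.sqrt μ) hsqrt
  have hvmu : (∫ x, V x * (Real.sin (Real.sqrt μ * ‖x‖) / (Real.sqrt μ * ‖x‖)) ^ 2)
      = K * ((∫ y in Ioi (0:ℝ), g y * Real.sin (Real.sqrt μ * y) ^ 2) / μ) := by
    rw [polar_formula (fun x : E3 => V x * (Real.sin (Real.sqrt μ * ‖x‖) / (Real.sqrt μ * ‖x‖)) ^ 2)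
      (fun r => g r * (Real.sin (Real.sqrt μ * r) / (Real.sqrt μ * r)) ^ 2)
      (fun x => by simp only [hrad])]
    congr 1
    rw [← integral_div]
    refine setIntegral_congr_fun measurableSet_Ioi fun y hy => ?_
    have hy0 : (0:ℝ) < y := hy
    have hsq : Real.sqrt μ ^ 2 = μ := Real.sq_sqrt hμpos.le
    have hsμ : Real.sqrt μ ≠ 0 := (Real.sqrt_pos.mpr hμpos).ne'
    rw [div_pow, mul_pow, hsq]
    field_simp
  rw [hvmu]
  have hle : K * ((∫ y in Ioi (0:ℝ), g y * Real.sin (Real.sqrt μ * y) ^ 2) / μ)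
      ≤ K * ((I / 4) / μ) := by
    exact mul_le_mul_of_nonneg_left ((div_le_div_iff_of_pos_right hμpos).mpr hs.le) hK.le
  refine le_trans hle (le_of_eq ?_)
  rw [neg_neg]
  field_simp
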